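/- arXiv:2511.18217 — 4 statements merged into one kernel-verified Lean document; each statement's English description precedes it below -/
import Mathlib

section
/- Let A ⊆ ℝ^d be a compact totally disconnected set containing at least two points, and let S ⊆ ℝ^d be a nonempty Steiner set for A (a closed set with S ∪ A connected minimizing H¹ among all such closed sets) with H¹(S) < ∞. Then S is connected. -/
open MeasureTheory Metric Set

/-- `S` is a Steiner set for `A`: a closed set such that `S ∪ A` is connected, of minimal
one-dimensional Hausdorff measure among all such closed sets. -/
def IsSteinerSet {d : ℕ} (A S : Set (EuclideanSpace ℝ (Fin d))) : Prop :=
  IsClosed S ∧ IsConnected (S ∪ A) ∧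
    ∀ S' : Set (EuclideanSpace ℝ (Fin d)), IsClosed S' → IsConnected (S' ∪ A) →
      μH[1] S ≤ μH[1] S'

theorem steiner_set_connected_of_totally_disconnected (d : ℕ)
    (A S : Set (EuclideanSpace ℝ (Fin d))) (hA : IsCompact A)
    (hAtd : IsTotallyDisconnected A) (hAnt : A.Nontrivial)
    (hSne : S.Nonempty) (hS : IsSteinerSet A S) (hfin : μH[1] S < ⊤) :
    IsConnected S := by
  obtain ⟨hScl, hconn, -⟩ := hS
  -- It suffices to show `A ⊆ S`.
  suffices hAS : A ⊆ S by
    rwa [Set.union_eq_self_of_subset_right hAS] at hconn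
  intro a ha
  by_contra haS
  -- `a` has positive distance from the closed set `S`.
  have hdpos : 0 < infDist a S := (hScl.notMem_iff_infDist_pos hSne).1 haS
  set r : ℝ := infDist a S / 2 with hr
  have hrpos : 0 < r := by positivity
  -- the closed ball around `a` of radius `r` misses `S`.
  have hball : ∀ x ∈ S, x ∉ closedBall a r := by
    intro x hx hxb
    have h1 : infDist a S ≤ dist a x := infDist_le_dist_of_mem hx
    have h2 : dist a x ≤ r := by rwa [mem_closedBall, dist_comm] at hxb
    nlinarith
  -- `K` is a compact, totally disconnected piece of `A` around `a`.
  set K : Set (EuclideanSpace ℝ (Fin d)) := A ∩ closedBall a r with hKdef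
  have hKcomp : IsCompact K := hA.inter_right isClosed_closedBall
  have haK : a ∈ K := ⟨ha, mem_closedBall_self hrpos.le⟩
  have hXK : (S ∪ A) ∩ closedBall a r = K := by
    ext x
    constructor
    · rintro ⟨hx | hx, hxb⟩
      · exact absurd hxb (hball x hx)
      · exact ⟨hx, hxb⟩
    · rintro ⟨hx, hxb⟩
      exact ⟨Or.inr hx, hxb⟩
  -- Work in the subtype `K`, a compact Hausdorff totally disconnected space.
  haveI : CompactSpace K := isCompact_iff_compactSpace.1 hKcomp
  haveI : TotallyDisconnectedSpace K :=
    totallyDisconnectedSpace_subtype_iff.2 fun t hts ht =>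
      hAtd t (hts.trans inter_subset_left) ht
  -- find a clopen (in `K`) neighborhood of `a` inside the open ball.
  obtain ⟨V, hVclopen, haV, hVball⟩ :=
    compact_exists_isClopen_in_isOpen (x := (⟨a, haK⟩ : K))
      (U := (Subtype.val ⁻¹' ball a r : Set K))
      (isOpen_ball.preimage continuous_subtype_val)
      (by simpa using hrpos)
  -- `D` is the corresponding subset of the ambient space.
  set D : Set (EuclideanSpace ℝ (Fin d)) := Subtype.val '' V with hDdef
  have haD : a ∈ D := ⟨⟨a, haK⟩, haV, rfl⟩
  have hDK : D ⊆ K := by rintro x ⟨y, -, rfl⟩; exact y.2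
  have hDball : D ⊆ ball a r := by
    rintro x ⟨y, hy, rfl⟩; exact hVball hy
  -- `D` is closed in the ambient space (it is compact).
  have hDclosed : IsClosed D :=
    ((hVclopen.1.isCompact).image continuous_subtype_val).isClosed
  -- `D` is the intersection of `K` with an ambient open set.
  obtain ⟨W, hWopen, hVW⟩ := isOpen_induced_iff.1 hVclopen.2
  have hDW : D = K ∩ W := by
    rw [hDdef, ← hVW, Subtype.image_preimage_coe]
  -- Now contradict the connectedness of `S ∪ A` using the clopen separation.
  have hpre : IsPreconnected (S ∪ A) := hconn.2
  have hcontr := hpre (W ∩ ball a r) Dᶜ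
    (hWopen.inter isOpen_ball) hDclosed.isOpen_compl
  obtain ⟨x, hxX, ⟨hxW, hxball⟩, hxD⟩ := by
    refine hcontr ?_ ?_ ?_
    · -- `S ∪ A ⊆ (W ∩ ball a r) ∪ Dᶜ`
      intro x hx
      by_cases hxD : x ∈ D
      · exact Or.inl ⟨(hDW ▸ hxD).2, hDball hxD⟩
      · exact Or.inr hxD
    · -- `(S ∪ A) ∩ (W ∩ ball a r)` is nonempty: contains `a`.
      exact ⟨a, Or.inr ha, (hDW ▸ haD).2, mem_ball_self hrpos⟩
    · -- `(S ∪ A) ∩ Dᶜ` is nonempty: contains any point of `S`.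
      obtain ⟨s₀, hs₀⟩ := hSne
      exact ⟨s₀, Or.inl hs₀, fun hs₀D => hball s₀ hs₀ (ball_subset_closedBall (hDball hs₀D))⟩
  -- but such an `x` would lie in `D` and `Dᶜ`.
  exact hxD (hDW ▸ (⟨⟨hxX.elim (fun h => absurd (ball_subset_closedBall hxball) (hball x h))
    (fun h => h), ball_subset_closedBall hxball⟩, hxW⟩ : x ∈ K ∩ W))
end

section
/- Let P = {(0,0), (1,0), (1/2, √3/2)} ⊆ ℝ² be the vertex set of an equilateral triangle with unit side. Then: (i) every compact connected set S ⊆ ℝ² with P ⊆ S satisfies H¹(S) ≥ √3; and (ii) there exists a compact connected set S ⊆ ℝ² with P ⊆ S and H¹(S) = √3 (so the Steiner tree for P has length √3). -/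
open MeasureTheory Metric Set Filter
open scoped ENNReal NNReal Topology

/-- The vertices of an equilateral triangle with unit side length in `ℝ²`. -/
noncomputable def trianglePts : Set (EuclideanSpace ℝ (Fin 2)) :=
  {(WithLp.equiv 2 (Fin 2 → ℝ)).symm ![0, 0],
   (WithLp.equiv 2 (Fin 2 → ℝ)).symm ![1, 0],
   (WithLp.equiv 2 (Fin 2 → ℝ)).symm ![1 / 2, Real.sqrt 3 / 2]}

namespace SteinerAux

noncomputable section

abbrev E2 := EuclideanSpace ℝ (Fin 2)

/-- Localized ball lemma: a connected set reaching distance `ρ` from `x` has at least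
measure `ρ` inside the closed ball. -/
lemma measure_inter_closedBall_ge {S : Set E2} (hS : IsPreconnected S) {x z : E2}
    (hx : x ∈ S) (hz : z ∈ S) {ρ : ℝ} (hρ0 : 0 ≤ ρ) (hρ : ρ ≤ dist x z) :
    ENNReal.ofReal ρ ≤ μH[1] (S ∩ closedBall x ρ) := by
  have hcont : ContinuousOn (fun w => dist x w) S := (continuous_const.dist continuous_id).continuousOn
  have him : IsPreconnected ((fun w => dist x w) '' S) := hS.image _ hcont
  have hIcc : Icc (0:ℝ) (dist x z) ⊆ (fun w => dist x w) '' S :=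
    him.Icc_subset ⟨x, hx, by simp⟩ ⟨z, hz, rfl⟩
  have hIm : Icc (0:ℝ) ρ ⊆ (fun w => dist x w) '' (S ∩ closedBall x ρ) := by
    intro v hv
    obtain ⟨w, hwS, hwv⟩ := hIcc ⟨hv.1, hv.2.trans hρ⟩
    exact ⟨w, ⟨hwS, by simp [mem_closedBall, dist_comm]; linarith [hv.2, hwv.le, hwv.ge]⟩, hwv⟩
  calc ENNReal.ofReal ρ = volume (Icc (0:ℝ) ρ) := by rw [Real.volume_Icc]; norm_num
    _ = μH[1] (Icc (0:ℝ) ρ) := by rw [hausdorffMeasure_real]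
    _ ≤ μH[1] ((fun w => dist x w) '' (S ∩ closedBall x ρ)) := measure_mono hIm
    _ ≤ μH[1] (S ∩ closedBall x ρ) := by
        simpa using (LipschitzWith.dist_right x).hausdorffMeasure_image_le zero_le_one
          (S ∩ closedBall x ρ)

/-- Two-point lemma: a connected set has `H¹`-measure at least the distance between any
two of its points. -/
lemma edist_le_measure {S : Set E2} (hS : IsPreconnected S) {x z : E2}
    (hx : x ∈ S) (hz : z ∈ S) : edist x z ≤ μH[1] S := by
  have := measure_inter_closedBall_ge hS hx hz dist_nonneg (le_refl (dist x z))
  rw [edist_dist]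
  exact this.trans (measure_mono inter_subset_left)


/-- A `δ`-chain in `S` from `x` to `y` with `k` steps. -/
def MChain (S : Set E2) (δ : ℝ) (x y : E2) (k : ℕ) (c : ℕ → E2) : Prop :=
  c 0 = x ∧ c k = y ∧ (∀ i ≤ k, c i ∈ S) ∧ ∀ i < k, dist (c i) (c (i + 1)) ≤ δ

lemma MChain.snoc {S : Set E2} {δ : ℝ} {x z : E2} {k : ℕ} {c : ℕ → E2}
    (h : MChain S δ x z k c) {w : E2} (hw : w ∈ S)
    (hzw : dist z w ≤ δ) : MChain S δ x w (k + 1) (fun i => if i ≤ k then c i else w) := by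
  obtain ⟨h0, hk, hmem, hstep⟩ := h
  refine ⟨by simpa using h0, by simp, ?_, ?_⟩
  · intro i hi
    by_cases hik : i ≤ k <;> simp [hik, hmem i, hw]
  · intro i hi
    rcases lt_or_ge i k with hik | hik
    · simp only [if_pos hik.le, if_pos (show i + 1 ≤ k from hik)]
      exact hstep i hik
    · have hik' : i = k := by omega
      simp only [hik', if_pos (le_refl k), if_neg (show ¬ k + 1 ≤ k by omega)]
      rwa [hk]

/-- In a connected set, `δ`-chains exist between any two points. -/
lemma exists_mchain {S : Set E2} (hS : IsPreconnected S) {δ : ℝ} (hδ : 0 < δ)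
    {x y : E2} (hx : x ∈ S) (hy : y ∈ S) : ∃ k c, MChain S δ x y k c := by
  by_contra hcon
  push_neg at hcon
  set R : Set E2 := {z ∈ S | ∃ k c, MChain S δ x z k c} with hR
  have hxR : x ∈ R := ⟨hx, 0, fun _ => x, rfl, rfl, fun i _ => hx, fun i hi => by omega⟩
  have hyR : y ∉ R := fun h => hcon h.2.choose h.2.choose_spec.choose h.2.choose_spec.choose_spec
  have hUopen : IsOpen (⋃ z ∈ R, ball z δ) := isOpen_biUnion fun _ _ => isOpen_ball
  have hVopen : IsOpen (⋃ z ∈ S \ R, ball z δ) := isOpen_biUnion fun _ _ => isOpen_ball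
  have hcover : S ⊆ (⋃ z ∈ R, ball z δ) ∪ (⋃ z ∈ S \ R, ball z δ) := by
    intro z hz
    by_cases hzR : z ∈ R
    · exact Or.inl (mem_biUnion hzR (mem_ball_self hδ))
    · exact Or.inr (mem_biUnion ⟨hz, hzR⟩ (mem_ball_self hδ))
  have hUne : (S ∩ ⋃ z ∈ R, ball z δ).Nonempty :=
    ⟨x, hx, mem_biUnion hxR (mem_ball_self hδ)⟩
  have hVne : (S ∩ ⋃ z ∈ S \ R, ball z δ).Nonempty :=
    ⟨y, hy, mem_biUnion ⟨hy, hyR⟩ (mem_ball_self hδ)⟩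
  obtain ⟨w, hwS, hwUV⟩ := hS _ _ hUopen hVopen hcover hUne hVne
  obtain ⟨hwU, hwV⟩ := hwUV
  obtain ⟨z, hzR, hwz⟩ := mem_iUnion₂.mp hwU
  obtain ⟨z', hz'SR, hwz'⟩ := mem_iUnion₂.mp hwV
  obtain ⟨hzS, k, c, hc⟩ := hzR
  have hwR : w ∈ R :=
    ⟨hwS, k + 1, _, hc.snoc hwS (mem_ball'.mp hwz).le⟩
  obtain ⟨hwS', k', c', hc'⟩ := hwR
  exact hz'SR.2 ⟨hz'SR.1, k' + 1, _, hc'.snoc hz'SR.1 (mem_ball.mp hwz').le⟩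

/-- A minimal chain: non-adjacent points are more than `δ` apart. -/
lemma exists_good_mchain {S : Set E2} (hS : IsPreconnected S) {δ : ℝ} (hδ : 0 < δ)
    {x y : E2} (hx : x ∈ S) (hy : y ∈ S) (hxy : x ≠ y) :
    ∃ k c, MChain S δ x y k c ∧ 1 ≤ k ∧ ∀ i j, i + 2 ≤ j → j ≤ k → δ < dist (c i) (c j) := by
  classical
  have hex : ∃ k, ∃ c, MChain S δ x y k c := exists_mchain hS hδ hx hy
  obtain ⟨c, hc⟩ := Nat.find_spec hex
  refine ⟨Nat.find hex, c, hc, ?_, ?_⟩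
  · rcases Nat.eq_zero_or_pos (Nat.find hex) with h | h
    · exact absurd (by rw [← hc.1, ← hc.2.1, h]) hxy
    · exact h
  · intro i j hij hjk
    by_contra hle
    push_neg at hle
    obtain ⟨h0, hky, hmem, hstep⟩ := hc
    set k₀ := Nat.find hex
    have hk'lt : k₀ - (j - i) + 1 < k₀ := by omega
    apply Nat.find_min hex hk'lt
    refine ⟨fun m => if m ≤ i then c m else c (m - 1 - i + j), ?_, ?_, ?_, ?_⟩
    · simp only [if_pos (Nat.zero_le i)]; exact h0
    · simp only [if_neg (show ¬ (k₀ - (j - i) + 1 ≤ i) by omega)]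
      have e : k₀ - (j - i) + 1 - 1 - i + j = k₀ := by omega
      rw [e]; exact hky
    · intro m hm
      by_cases hmi : m ≤ i
      · simp only [if_pos hmi]; exact hmem m (by omega)
      · simp only [if_neg hmi]; exact hmem _ (by omega)
    · intro m hm
      rcases lt_trichotomy m i with hmi | hmi | hmi
      · simp only [if_pos hmi.le, if_pos (show m + 1 ≤ i by omega)]
        exact hstep m (by omega)
      · subst hmi
        simp only [if_pos (le_refl m), if_neg (show ¬ m + 1 ≤ m by omega)]
        have e : m + 1 - 1 - m + j = j := by omega
        rw [e]; exact hle
      · simp only [if_neg (show ¬ m ≤ i by omega), if_neg (show ¬ m + 1 ≤ i by omega)]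
        have e : m + 1 - 1 - i + j = (m - 1 - i + j) + 1 := by omega
        rw [e]
        exact hstep _ (by omega)

/-- Length bound for a minimal chain. -/
lemma good_mchain_length_bound {S : Set E2} (hS : IsPreconnected S) (hmeas : MeasurableSet S)
    {δ : ℝ} (hδ : 0 < δ) (hδ1 : δ ≤ 1) {x y : E2} (hd : 1 ≤ dist x y) {k : ℕ} {c : ℕ → E2}
    (hc : MChain S δ x y k c)
    (hsp : ∀ i j, i + 2 ≤ j → j ≤ k → δ < dist (c i) (c j)) :
    (k : ℝ) * δ ≤ 4 * (μH[1] S).toReal ∨ μH[1] S = ⊤ := by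
  rcases eq_or_ne (μH[1] S) ⊤ with htop | htop
  · exact Or.inr htop
  left
  obtain ⟨h0, hky, hmem, hstep⟩ := hc
  have hxS : x ∈ S := h0 ▸ hmem 0 (Nat.zero_le k)
  have hyS : y ∈ S := hky ▸ hmem k (le_refl k)
  -- the disjoint balls around even-indexed chain points
  set J := Finset.range (k / 2 + 1) with hJ
  have hidx : ∀ m ∈ J, 2 * m ≤ k := by
    intro m hm; rw [hJ, Finset.mem_range] at hm; omega
  have hball : ∀ m ∈ J, ENNReal.ofReal (δ / 2) ≤ μH[1] (S ∩ closedBall (c (2 * m)) (δ / 2)) := by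
    intro m hm
    -- there is a far point: x or y
    have h2m := hmem _ (hidx m hm)
    have : δ / 2 ≤ dist (c (2 * m)) x ∨ δ / 2 ≤ dist (c (2 * m)) y := by
      by_contra hcon
      push_neg at hcon
      have := dist_triangle x (c (2 * m)) y
      rw [dist_comm x (c (2*m))] at this
      linarith [hcon.1, hcon.2, hd]
    rcases this with h | h
    · exact measure_inter_closedBall_ge hS h2m hxS (by linarith) h
    · exact measure_inter_closedBall_ge hS h2m hyS (by linarith) h
  have hdisj : (J : Set ℕ).PairwiseDisjoint
      (fun m => S ∩ closedBall (c (2 * m)) (δ / 2)) := by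
    intro m hm m' hm' hne
    have hmJ := hidx m hm; have hm'J := hidx m' hm'
    have key : δ < dist (c (2 * m)) (c (2 * m')) := by
      rcases lt_or_gt_of_ne (show m ≠ m' from hne) with h | h
      · exact hsp _ _ (by omega) (by omega)
      · rw [dist_comm]; exact hsp _ _ (by omega) (by omega)
    refine Set.disjoint_left.mpr fun w hw hw' => ?_
    have h1 := mem_closedBall.mp hw.2
    have h2 := mem_closedBall.mp hw'.2
    have := dist_triangle (c (2 * m)) w (c (2 * m'))
    rw [dist_comm (c (2*m)) w] at this
    linarith
  have hmeasb : ∀ m ∈ J, MeasurableSet (S ∩ closedBall (c (2 * m)) (δ / 2)) :=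
    fun m _ => hmeas.inter measurableSet_closedBall
  have hsum : ∑ m ∈ J, μH[1] (S ∩ closedBall (c (2 * m)) (δ / 2)) ≤ μH[1] S := by
    rw [← measure_biUnion_finset hdisj hmeasb]
    exact measure_mono (iUnion₂_subset fun m _ => inter_subset_left)
  have hcard : (J.card : ℝ≥0∞) * ENNReal.ofReal (δ / 2) ≤ μH[1] S := by
    calc (J.card : ℝ≥0∞) * ENNReal.ofReal (δ / 2)
        = ∑ _m ∈ J, ENNReal.ofReal (δ / 2) := by rw [Finset.sum_const, nsmul_eq_mul]
      _ ≤ ∑ m ∈ J, μH[1] (S ∩ closedBall (c (2 * m)) (δ / 2)) := Finset.sum_le_sum hball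
      _ ≤ μH[1] S := hsum
  have hcardJ : J.card = k / 2 + 1 := Finset.card_range _
  -- convert to reals
  have hreal : ((k / 2 + 1 : ℕ) : ℝ) * (δ / 2) ≤ (μH[1] S).toReal := by
    have := ENNReal.toReal_mono htop hcard
    rw [ENNReal.toReal_mul, ENNReal.toReal_ofReal (by linarith)] at this
    rw [hcardJ, ENNReal.toReal_natCast] at this
    simpa using this
  have hk2 : (k : ℝ) ≤ 2 * ((k / 2 + 1 : ℕ) : ℝ) := by
    have : k ≤ 2 * (k / 2 + 1) := by omega
    exact_mod_cast this
  nlinarith [hreal, hk2, hδ.le]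


/-- clamp function -/
def clamp (s : ℝ) : ℝ := max 0 (min 1 s)

lemma clamp_sum (k : ℕ) (s : ℝ) :
    ∑ i ∈ Finset.range k, clamp (s - i) = max 0 (min s k) := by
  induction k with
  | zero => simp [min_le_iff]
  | succ k ih =>
    rw [Finset.sum_range_succ, ih]
    push_cast
    unfold clamp
    rcases le_total s (k : ℝ) with h | h
    · rw [max_eq_left (by simp [min_le_iff]; right; linarith : min 1 (s - k) ≤ 0)]
      rw [min_eq_left h, min_eq_left (by linarith : s ≤ (k:ℝ) + 1)]
      ring
    · rw [min_eq_right h, max_eq_right (Nat.cast_nonneg k)]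
      rcases le_total s ((k:ℝ) + 1) with h1 | h1
      · rw [min_eq_right (by linarith : s - k ≤ 1), max_eq_right (by linarith : (0:ℝ) ≤ s - k),
          min_eq_left h1, max_eq_right (by linarith : (0:ℝ) ≤ s)]
        ring
      · rw [min_eq_left (by linarith : (1:ℝ) ≤ s - k), min_eq_right h1,
          max_eq_right (by linarith : (0:ℝ) ≤ (k:ℝ) + 1), max_eq_right (by norm_num : (0:ℝ) ≤ 1)]

lemma clamp_mono {s t : ℝ} (h : s ≤ t) : clamp s ≤ clamp t :=
  max_le_max (le_refl 0) (min_le_min (le_refl 1) h)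

lemma clamp_nonneg (s : ℝ) : 0 ≤ clamp s := le_max_left _ _
lemma clamp_le_one (s : ℝ) : clamp s ≤ 1 := max_le zero_le_one (min_le_left _ _)

lemma maxmin_lipschitz (k : ℝ) {a b : ℝ} (h : a ≤ b) :
    max 0 (min b k) - max 0 (min a k) ≤ b - a := by
  have h1 : |max (min b k) 0 - max (min a k) 0| ≤ |min b k - min a k| :=
    abs_max_sub_max_le_abs _ _ _
  have h2 : |min b k - min a k| ≤ |b - a| := abs_min_sub_min_le_max _ _ _ _ |>.trans ?_
  · calc max 0 (min b k) - max 0 (min a k)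
        ≤ |max 0 (min b k) - max 0 (min a k)| := le_abs_self _
      _ = |max (min b k) 0 - max (min a k) 0| := by rw [max_comm 0, max_comm 0]
      _ ≤ |b - a| := h1.trans h2
      _ = b - a := abs_of_nonneg (by linarith)
  · simp [abs_sub_comm k k]

lemma clamp_eq_zero {s : ℝ} (h : s ≤ 0) : clamp s = 0 :=
  max_eq_left ((min_le_right _ _).trans h)
lemma clamp_eq_one {s : ℝ} (h : 1 ≤ s) : clamp s = 1 := by
  rw [clamp, min_eq_left h, max_eq_right zero_le_one]
lemma clamp_eq_self {s : ℝ} (h0 : 0 ≤ s) (h1 : s ≤ 1) : clamp s = s := by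
  rw [clamp, min_eq_right h1, max_eq_right h0]

/-- Polygonal path through the points `c 0, ..., c k`, linear on each `[i/k, (i+1)/k]`. -/
def poly (k : ℕ) (c : ℕ → E2) (t : ℝ) : E2 :=
  c 0 + ∑ i ∈ Finset.range k, clamp ((k : ℝ) * t - i) • (c (i + 1) - c i)

lemma poly_nonpos (k : ℕ) (c : ℕ → E2) {t : ℝ} (ht : t ≤ 0) : poly k c t = c 0 := by
  have : ∀ i ∈ Finset.range k, clamp ((k : ℝ) * t - i) • (c (i + 1) - c i) = 0 := by
    intro i _
    rw [clamp_eq_zero (by nlinarith [Nat.cast_nonneg (α := ℝ) k, Nat.cast_nonneg (α := ℝ) i]),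
      zero_smul]
  rw [poly, Finset.sum_congr rfl this, Finset.sum_const_zero, add_zero]

lemma poly_ge_one (k : ℕ) (c : ℕ → E2) {t : ℝ} (ht : 1 ≤ t) : poly k c t = c k := by
  have : ∀ i ∈ Finset.range k, clamp ((k : ℝ) * t - i) • (c (i + 1) - c i) = c (i+1) - c i := by
    intro i hi
    rw [Finset.mem_range] at hi
    have : (1:ℝ) ≤ (k : ℝ) * t - i := by
      have : (i:ℝ) + 1 ≤ (k:ℝ) := by exact_mod_cast hi
      nlinarith [Nat.cast_nonneg (α := ℝ) k]
    rw [clamp_eq_one this, one_smul]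
  rw [poly, Finset.sum_congr rfl this, Finset.sum_range_sub]
  abel

lemma poly_zero (k : ℕ) (c : ℕ → E2) : poly k c 0 = c 0 := poly_nonpos k c le_rfl
lemma poly_one (k : ℕ) (c : ℕ → E2) : poly k c 1 = c k := poly_ge_one k c le_rfl

/-- closed form on each subinterval -/
lemma poly_eq_piece (k : ℕ) (c : ℕ → E2) {j : ℕ} (hj : j < k) {t : ℝ}
    (h1 : (j : ℝ) ≤ (k : ℝ) * t) (h2 : (k : ℝ) * t ≤ (j : ℝ) + 1) :
    poly k c t = c j + ((k : ℝ) * t - j) • (c (j + 1) - c j) := by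
  rw [poly]
  have hsplit : Finset.range k = Finset.range (j+1) ∪ Finset.Ico (j+1) k := by
    simp only [Finset.range_eq_Ico]
    exact (Finset.Ico_union_Ico_eq_Ico (Nat.zero_le _) hj).symm
  rw [hsplit, Finset.sum_union (by
    simp [Finset.disjoint_left]; intro a ha; omega)]
  rw [Finset.sum_range_succ]
  have e1 : ∀ i ∈ Finset.range j, clamp ((k:ℝ) * t - i) • (c (i+1) - c i) = c (i+1) - c i := by
    intro i hi
    rw [Finset.mem_range] at hi
    have : (1:ℝ) ≤ (k:ℝ) * t - i := by
      have : (i:ℝ) + 1 ≤ (j:ℝ) := by exact_mod_cast hi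
      linarith
    rw [clamp_eq_one this, one_smul]
  have e2 : ∀ i ∈ Finset.Ico (j+1) k, clamp ((k:ℝ) * t - i) • (c (i+1) - c i) = 0 := by
    intro i hi
    rw [Finset.mem_Ico] at hi
    have : ((j:ℝ) + 1) ≤ (i:ℝ) := by exact_mod_cast hi.1
    rw [clamp_eq_zero (by linarith), zero_smul]
  rw [Finset.sum_congr rfl e1, Finset.sum_congr rfl e2, Finset.sum_range_sub,
    Finset.sum_const_zero, clamp_eq_self (by linarith) (by linarith)]
  abel

/-- every point of the polygonal path is within `δ` of a chain point -/
lemma poly_close (k : ℕ) (c : ℕ → E2) {δ : ℝ} (hδ : 0 ≤ δ) (hk : 1 ≤ k)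
    (hc : ∀ i < k, dist (c i) (c (i + 1)) ≤ δ) (t : ℝ) :
    ∃ j ≤ k, dist (poly k c t) (c j) ≤ δ := by
  rcases le_or_gt t 0 with ht | ht
  · exact ⟨0, Nat.zero_le _, by rw [poly_nonpos k c ht]; simpa using hδ⟩
  rcases le_or_gt 1 t with ht1 | ht1
  · exact ⟨k, le_rfl, by rw [poly_ge_one k c ht1]; simpa using hδ⟩
  set j := min (k - 1) ⌊(k : ℝ) * t⌋₊ with hjdef
  have hkt0 : 0 ≤ (k : ℝ) * t := by positivity
  have hjk : j < k := by
    have : k - 1 < k := by omega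
    exact lt_of_le_of_lt (min_le_left _ _) this
  have h1 : (j : ℝ) ≤ (k : ℝ) * t := by
    rcases le_total ⌊(k : ℝ) * t⌋₊ (k - 1) with h | h
    · have : j = ⌊(k : ℝ) * t⌋₊ := by omega
      rw [this]; exact Nat.floor_le hkt0
    · have hj' : j = k - 1 := by omega
      rw [hj']
      calc ((k - 1 : ℕ) : ℝ) ≤ (⌊(k : ℝ) * t⌋₊ : ℝ) := by exact_mod_cast h
        _ ≤ (k : ℝ) * t := Nat.floor_le hkt0
  have h2 : (k : ℝ) * t ≤ (j : ℝ) + 1 := by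
    rcases le_total ⌊(k : ℝ) * t⌋₊ (k - 1) with h | h
    · have : j = ⌊(k : ℝ) * t⌋₊ := by omega
      rw [this]; exact (Nat.lt_floor_add_one _).le
    · have hj' : j = k - 1 := by omega
      rw [hj']
      have : ((k - 1 : ℕ) : ℝ) + 1 = (k : ℝ) := by
        have : (1:ℕ) ≤ k := hk
        push_cast [Nat.cast_sub this]
        ring
      rw [this]
      nlinarith [Nat.cast_nonneg (α := ℝ) k]
  refine ⟨j, hjk.le, ?_⟩
  rw [poly_eq_piece k c hjk h1 h2]
  have : dist (c j + ((k:ℝ) * t - j) • (c (j+1) - c j)) (c j)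
      = ‖((k:ℝ) * t - j) • (c (j+1) - c j)‖ := by
    rw [dist_eq_norm]; congr 1; abel
  rw [this, norm_smul, Real.norm_eq_abs, abs_of_nonneg (by linarith)]
  calc ((k:ℝ) * t - j) * ‖c (j+1) - c j‖ ≤ 1 * ‖c (j+1) - c j‖ := by
        apply mul_le_mul_of_nonneg_right (by linarith) (norm_nonneg _)
    _ = dist (c j) (c (j+1)) := by rw [one_mul, dist_eq_norm, norm_sub_rev]
    _ ≤ δ := hc j hjk

lemma poly_dist_le (k : ℕ) (c : ℕ → E2) {δ : ℝ} (hδ : 0 ≤ δ)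
    (hc : ∀ i < k, dist (c i) (c (i + 1)) ≤ δ) {s t : ℝ} (hst : s ≤ t) :
    dist (poly k c s) (poly k c t) ≤ (k : ℝ) * δ * (t - s) := by
  have hdiff : poly k c s - poly k c t =
      ∑ i ∈ Finset.range k,
        (clamp ((k:ℝ) * s - i) - clamp ((k:ℝ) * t - i)) • (c (i + 1) - c i) := by
    simp only [poly, add_sub_add_left_eq_sub, ← Finset.sum_sub_distrib, ← sub_smul]
  have hkst : (k:ℝ) * s ≤ (k:ℝ) * t := by
    apply mul_le_mul_of_nonneg_left hst (Nat.cast_nonneg k)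
  rw [dist_eq_norm, hdiff]
  calc ‖∑ i ∈ Finset.range k,
        (clamp ((k:ℝ) * s - i) - clamp ((k:ℝ) * t - i)) • (c (i + 1) - c i)‖
      ≤ ∑ i ∈ Finset.range k,
        ‖(clamp ((k:ℝ) * s - i) - clamp ((k:ℝ) * t - i)) • (c (i + 1) - c i)‖ :=
        norm_sum_le _ _
    _ ≤ ∑ i ∈ Finset.range k,
        (clamp ((k:ℝ) * t - i) - clamp ((k:ℝ) * s - i)) * δ := by
        apply Finset.sum_le_sum
        intro i hi
        rw [Finset.mem_range] at hi
        rw [norm_smul, Real.norm_eq_abs]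
        have hmono : clamp ((k:ℝ) * s - i) ≤ clamp ((k:ℝ) * t - i) :=
          clamp_mono (by linarith)
        rw [abs_of_nonpos (by linarith), neg_sub]
        apply mul_le_mul_of_nonneg_left _ (by linarith)
        rw [← dist_eq_norm, dist_comm]
        exact hc i hi
    _ = ((max 0 (min ((k:ℝ) * t) k)) - (max 0 (min ((k:ℝ) * s) k))) * δ := by
        rw [← Finset.sum_mul, Finset.sum_sub_distrib, clamp_sum, clamp_sum]
    _ ≤ ((k:ℝ) * t - (k:ℝ) * s) * δ := by
        apply mul_le_mul_of_nonneg_right (maxmin_lipschitz _ hkst) hδ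
    _ = (k : ℝ) * δ * (t - s) := by ring

/-- Lipschitz estimate for the polygonal path. -/
lemma poly_dist (k : ℕ) (c : ℕ → E2) {δ : ℝ} (hδ : 0 ≤ δ)
    (hc : ∀ i < k, dist (c i) (c (i + 1)) ≤ δ) (s t : ℝ) :
    dist (poly k c s) (poly k c t) ≤ (k : ℝ) * δ * |s - t| := by
  rcases le_total s t with h | h
  · rw [abs_sub_comm, abs_of_nonneg (by linarith)]
    exact poly_dist_le k c hδ hc h
  · rw [abs_of_nonneg (by linarith), dist_comm]
    exact poly_dist_le k c hδ hc h

/-- Pointwise limits along a fixed ultrafilter, for functions into a compact set. -/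
lemma exists_ultralim {K : Set E2} (hK : IsCompact K) (γ : ℕ → ℝ → E2)
    (hmem : ∀ n t, γ n t ∈ K) :
    ∃ g : ℝ → E2, ∀ t, Tendsto (fun n => γ n t) (hyperfilter ℕ : Filter ℕ) (𝓝 (g t)) := by
  have h : ∀ t : ℝ, ∃ a ∈ K, ↑(Ultrafilter.map (fun n => γ n t) (hyperfilter ℕ)) ≤ 𝓝 a := by
    intro t
    apply hK.ultrafilter_le_nhds
    rw [Ultrafilter.coe_map, le_principal_iff, mem_map]
    exact univ_mem' fun n => hmem n t
  choose g hgK hg using h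
  exact ⟨g, fun t => hg t⟩

lemma hyper_le_atTop : (hyperfilter ℕ : Filter ℕ) ≤ atTop := by
  rw [← Nat.cofinite_eq_atTop]; exact hyperfilter_le_cofinite

/-- Existence of a Lipschitz path between two points of a compact connected set of
finite `H¹` measure. -/
lemma exists_lipschitz_path {S : Set E2} (hconn : IsPreconnected S) (hcomp : IsCompact S)
    (hfin : μH[1] S ≠ ⊤) (hne : S.Nonempty) {x y : E2} (hx : x ∈ S) (hy : y ∈ S)
    (hd : 1 ≤ dist x y) :
    ∃ L : ℝ, 0 ≤ L ∧ ∃ γ : ℝ → E2, (∀ s t, dist (γ s) (γ t) ≤ L * |s - t|) ∧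
      γ 0 = x ∧ γ 1 = y ∧ ∀ t, γ t ∈ S := by
  have hxy : x ≠ y := by
    intro h; rw [h, dist_self] at hd; linarith
  set M := (μH[1] S).toReal with hM
  -- chains for δ = 1/(n+1)
  have hchain : ∀ n : ℕ, ∃ k c, MChain S (1 / (n + 1)) x y k c ∧ 1 ≤ k ∧
      (k : ℝ) * (1 / (n + 1)) ≤ 4 * M := by
    intro n
    have hδ : (0:ℝ) < 1 / (n + 1) := by positivity
    obtain ⟨k, c, hc, hk1, hsp⟩ := exists_good_mchain hconn hδ hx hy hxy
    have hδ1 : (1:ℝ) / (n + 1) ≤ 1 := by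
      rw [div_le_one (by positivity)]; linarith [Nat.cast_nonneg (α := ℝ) n]
    rcases good_mchain_length_bound hconn hcomp.measurableSet hδ hδ1 hd hc hsp with h | h
    · exact ⟨k, c, hc, hk1, h⟩
    · exact absurd h hfin
  choose k c hc hk1 hlen using hchain
  set γ : ℕ → ℝ → E2 := fun n => poly (k n) (c n) with hγ
  have hδpos : ∀ n : ℕ, (0:ℝ) < 1 / (n + 1) := fun n => by positivity
  have hδle : ∀ n : ℕ, (1:ℝ) / (n + 1) ≤ 1 := fun n => by
    rw [div_le_one (by positivity)]; linarith [Nat.cast_nonneg (α := ℝ) n]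
  -- uniform Lipschitz bound
  have hLip : ∀ n s t, dist (γ n s) (γ n t) ≤ (4 * M) * |s - t| := by
    intro n s t
    calc dist (γ n s) (γ n t) ≤ ((k n : ℝ) * (1 / (n + 1))) * |s - t| :=
          poly_dist _ _ (hδpos n).le (hc n).2.2.2 s t
      _ ≤ (4 * M) * |s - t| := by
          apply mul_le_mul_of_nonneg_right (hlen n) (abs_nonneg _)
  -- containment in a compact set
  obtain ⟨R, hR⟩ := hcomp.isBounded.subset_closedBall 0
  have hmem : ∀ n t, γ n t ∈ closedBall (0 : E2) (R + 1) := by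
    intro n t
    obtain ⟨j, hjk, hjd⟩ := poly_close (k n) (c n) (hδpos n).le (hk1 n) (hc n).2.2.2 t
    have hcj : c n j ∈ S := (hc n).2.2.1 j hjk
    have := hR hcj
    rw [mem_closedBall] at *
    calc dist (γ n t) 0 ≤ dist (γ n t) (c n j) + dist (c n j) 0 := dist_triangle _ _ _
      _ ≤ 1 / (n + 1) + R := by
          have := hδle n; gcongr
      _ ≤ R + 1 := by linarith [hδle n]
  obtain ⟨g, hg⟩ := exists_ultralim (isCompact_closedBall 0 (R + 1)) γ hmem
  haveI : (hyperfilter ℕ : Filter ℕ).NeBot := inferInstance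
  refine ⟨4 * M, by positivity, g, ?_, ?_, ?_, ?_⟩
  · intro s t
    have h1 : Tendsto (fun n => dist (γ n s) (γ n t)) (hyperfilter ℕ : Filter ℕ)
        (𝓝 (dist (g s) (g t))) := (hg s).dist (hg t)
    exact le_of_tendsto h1 (Eventually.of_forall fun n => hLip n s t)
  · have h0 : ∀ n, γ n 0 = x := fun n => (poly_zero _ _).trans (hc n).1
    have : Tendsto (fun n => γ n 0) (hyperfilter ℕ : Filter ℕ) (𝓝 x) := by
      simp only [h0]; exact tendsto_const_nhds
    exact tendsto_nhds_unique (hg 0) this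
  · have h1 : ∀ n, γ n 1 = y := fun n => (poly_one _ _).trans (hc n).2.1
    have : Tendsto (fun n => γ n 1) (hyperfilter ℕ : Filter ℕ) (𝓝 y) := by
      simp only [h1]; exact tendsto_const_nhds
    exact tendsto_nhds_unique (hg 1) this
  · intro t
    have hinf : ∀ n, infDist (γ n t) S ≤ 1 / (n + 1) := by
      intro n
      obtain ⟨j, hjk, hjd⟩ := poly_close (k n) (c n) (hδpos n).le (hk1 n) (hc n).2.2.2 t
      exact (infDist_le_dist_of_mem ((hc n).2.2.1 j hjk)).trans hjd
    have htend : Tendsto (fun n => infDist (γ n t) S) (hyperfilter ℕ : Filter ℕ)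
        (𝓝 (infDist (g t) S)) :=
      ((continuous_infDist_pt S).continuousAt.tendsto.comp (hg t))
    have hzero : Tendsto (fun n : ℕ => (1:ℝ) / (n + 1)) (hyperfilter ℕ : Filter ℕ) (𝓝 0) :=
      (tendsto_one_div_add_atTop_nhds_zero_nat).mono_left hyper_le_atTop
    have hle : infDist (g t) S ≤ 0 :=
      le_of_tendsto_of_tendsto' htend hzero hinf
    have : infDist (g t) S = 0 := le_antisymm hle (infDist_nonneg)
    exact (hcomp.isClosed.mem_iff_infDist_zero hne).mpr this

/-- Existence of an injective (on `[0,1]`) path between two points of a compact connected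
set of finite `H¹` measure. -/
lemma exists_injective_path {S : Set E2} (hconn : IsPreconnected S) (hcomp : IsCompact S)
    (hfin : μH[1] S ≠ ⊤) (hne : S.Nonempty) {x y : E2} (hx : x ∈ S) (hy : y ∈ S)
    (hd : 1 ≤ dist x y) :
    ∃ γ : ℝ → E2, Continuous γ ∧ γ 0 = x ∧ γ 1 = y ∧ (∀ t, γ t ∈ S) ∧
      InjOn γ (Icc 0 1) := by
  have hxy : x ≠ y := fun h => by rw [h, dist_self] at hd; linarith
  set A : Set ℝ := {L | 0 ≤ L ∧ ∃ γ : ℝ → E2, (∀ s t, dist (γ s) (γ t) ≤ L * |s - t|) ∧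
      γ 0 = x ∧ γ 1 = y ∧ ∀ t, γ t ∈ S} with hA
  have hAne : A.Nonempty := by
    obtain ⟨L, hL0, γ, h1, h2, h3, h4⟩ := exists_lipschitz_path hconn hcomp hfin hne hx hy hd
    exact ⟨L, hL0, γ, h1, h2, h3, h4⟩
  have hAbd : BddBelow A := ⟨0, fun L hL => hL.1⟩
  set ℓ := sInf A with hℓ
  have hℓ0 : 0 ≤ ℓ := le_csInf hAne fun L hL => hL.1
  -- approximate minimizers
  have happrox : ∀ n : ℕ, ∃ γ : ℝ → E2,
      (∀ s t, dist (γ s) (γ t) ≤ (ℓ + 1 / (n + 1)) * |s - t|) ∧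
      γ 0 = x ∧ γ 1 = y ∧ ∀ t, γ t ∈ S := by
    intro n
    have hlt : ℓ < ℓ + 1 / (n + 1) := by
      have : (0:ℝ) < 1 / (n+1) := by positivity
      linarith
    obtain ⟨L, hLA, hLlt⟩ := exists_lt_of_csInf_lt hAne hlt
    obtain ⟨hL0, γ, h1, h2, h3, h4⟩ := hLA
    refine ⟨γ, fun s t => (h1 s t).trans ?_, h2, h3, h4⟩
    apply mul_le_mul_of_nonneg_right hLlt.le (abs_nonneg _)
  choose γn hγd hγ0 hγ1 hγS using happrox
  obtain ⟨g, hg⟩ := exists_ultralim hcomp γn (fun n t => hγS n t)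
  haveI : (hyperfilter ℕ : Filter ℕ).NeBot := inferInstance
  have hgd : ∀ s t, dist (g s) (g t) ≤ ℓ * |s - t| := by
    intro s t
    have h1 : Tendsto (fun n => dist (γn n s) (γn n t)) (hyperfilter ℕ : Filter ℕ)
        (𝓝 (dist (g s) (g t))) := (hg s).dist (hg t)
    have h2 : Tendsto (fun n : ℕ => (ℓ + 1 / (n + 1)) * |s - t|) (hyperfilter ℕ : Filter ℕ)
        (𝓝 (ℓ * |s - t|)) := by
      have := (tendsto_one_div_add_atTop_nhds_zero_nat).const_add ℓ
      rw [add_zero] at this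
      exact (this.mul_const _).mono_left hyper_le_atTop
    exact le_of_tendsto_of_tendsto' h1 h2 fun n => hγd n s t
  have hg0 : g 0 = x := by
    refine tendsto_nhds_unique (hg 0) ?_
    simp only [hγ0]; exact tendsto_const_nhds
  have hg1 : g 1 = y := by
    refine tendsto_nhds_unique (hg 1) ?_
    simp only [hγ1]; exact tendsto_const_nhds
  have hgS : ∀ t, g t ∈ S := by
    intro t
    exact hcomp.isClosed.mem_of_tendsto (hg t) (Eventually.of_forall fun n => hγS n t)
  have hℓA : ℓ ∈ A := ⟨hℓ0, g, hgd, hg0, hg1, hgS⟩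
  have hℓpos : 0 < ℓ := by
    rcases hℓ0.lt_or_eq with h | h
    · exact h
    · exfalso
      apply hxy
      have := hgd 0 1
      rw [← h, zero_mul] at this
      have : dist (g 0) (g 1) = 0 := le_antisymm this dist_nonneg
      rw [← hg0, ← hg1]
      exact eq_of_dist_eq_zero this
  -- injectivity via the cut-and-reparametrize argument
  have key : ∀ a b : ℝ, a ∈ Icc (0:ℝ) 1 → b ∈ Icc (0:ℝ) 1 → a < b → g a ≠ g b := by
    intro a b ha hb hab hgab
    have hba : b - a < 1 := by
      rcases lt_or_eq_of_le (show b - a ≤ 1 by linarith [ha.1, hb.2]) with h | h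
      · exact h
      · exfalso
        have ha0 : a = 0 := by linarith [ha.1, hb.2]
        have hb1 : b = 1 := by linarith [ha.1, hb.2]
        apply hxy
        rw [← hg0, ← hg1, ← ha0, ← hb1]; exact hgab
    set lam := 1 - (b - a) with hlam
    have hlam0 : 0 < lam := by simp [hlam]; linarith
    have hlam1 : lam < 1 := by simp [hlam]; linarith
    set γ' : ℝ → E2 := fun t => if lam * t ≤ a then g (lam * t) else g (lam * t + (b - a))
      with hγ'
    have haux : ∀ s t : ℝ, s ≤ t → dist (γ' s) (γ' t) ≤ (lam * ℓ) * (t - s) := by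
      intro s t hst
      have hlst : lam * s ≤ lam * t := by nlinarith
      by_cases h1 : lam * t ≤ a
      · have h2 : lam * s ≤ a := le_trans hlst h1
        simp only [hγ', if_pos h1, if_pos h2]
        calc dist (g (lam * s)) (g (lam * t)) ≤ ℓ * |lam * s - lam * t| := hgd _ _
          _ = (lam * ℓ) * (t - s) := by
              rw [abs_sub_comm, abs_of_nonneg (by linarith)]; ring
      · by_cases h2 : lam * s ≤ a
        · simp only [hγ', if_pos h2, if_neg h1]
          push_neg at h1
          calc dist (g (lam * s)) (g (lam * t + (b - a)))
              ≤ dist (g (lam * s)) (g a) + dist (g a) (g (lam * t + (b - a))) :=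
                dist_triangle _ _ _
            _ = dist (g (lam * s)) (g a) + dist (g b) (g (lam * t + (b - a))) := by
                rw [hgab]
            _ ≤ ℓ * |lam * s - a| + ℓ * |b - (lam * t + (b - a))| := by
                gcongr <;> [exact hgd _ _; exact hgd _ _]
            _ = (lam * ℓ) * (t - s) := by
                rw [abs_sub_comm, abs_of_nonneg (by linarith),
                  abs_of_nonpos (by linarith), ]
                ring
        · push_neg at h2
          have h1' : ¬ lam * t ≤ a := by push_neg at h1 ⊢; linarith
          simp only [hγ', if_neg h1', if_neg (by push_neg; exact h2 : ¬ lam * s ≤ a)]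
          calc dist (g (lam * s + (b - a))) (g (lam * t + (b - a)))
              ≤ ℓ * |lam * s + (b - a) - (lam * t + (b - a))| := hgd _ _
            _ = (lam * ℓ) * (t - s) := by
                rw [abs_sub_comm, abs_of_nonneg (by linarith)]; ring
    have hγ'A : lam * ℓ ∈ A := by
      refine ⟨by positivity, γ', ?_, ?_, ?_, ?_⟩
      · intro s t
        rcases le_total s t with h | h
        · rw [abs_sub_comm, abs_of_nonneg (by linarith)]; exact haux s t h
        · rw [abs_of_nonneg (by linarith), dist_comm]; exact haux t s h
      · show (if lam * 0 ≤ a then g (lam * 0) else g (lam * 0 + (b - a))) = x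
        rw [mul_zero, if_pos ha.1]
        exact hg0
      · show (if lam * 1 ≤ a then g (lam * 1) else g (lam * 1 + (b - a))) = y
        rw [mul_one]
        by_cases h : lam ≤ a
        · have hlam_eq : lam = a := le_antisymm h (by rw [hlam]; linarith [hb.2])
          rw [if_pos h, hlam_eq, hgab]
          have hb1 : b = 1 := by rw [hlam] at hlam_eq; linarith
          rw [hb1]; exact hg1
        · rw [if_neg h, show lam + (b - a) = 1 from by rw [hlam]; ring]
          exact hg1
      · intro t
        show (if lam * t ≤ a then g (lam * t) else g (lam * t + (b - a))) ∈ S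
        by_cases h : lam * t ≤ a
        · rw [if_pos h]; exact hgS _
        · rw [if_neg h]; exact hgS _
    have : ℓ ≤ lam * ℓ := csInf_le hAbd hγ'A
    nlinarith
  refine ⟨g, ?_, hg0, hg1, hgS, ?_⟩
  · refine LipschitzWith.continuous (K := Real.toNNReal ℓ) ?_
    apply LipschitzWith.of_dist_le_mul
    intro s t
    rw [Real.coe_toNNReal _ hℓ0, Real.dist_eq]
    exact hgd s t
  · intro a ha b hb hgab
    rcases lt_trichotomy a b with h | h | h
    · exact absurd hgab (key a b ha hb h)
    · exact h
    · exact absurd hgab.symm (key b a hb ha h)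

def mk2 (a b : ℝ) : E2 := (WithLp.equiv 2 (Fin 2 → ℝ)).symm ![a, b]

lemma mk2_apply_zero (a b : ℝ) : mk2 a b 0 = a := by
  simp [mk2, WithLp.equiv_symm_apply]
lemma mk2_apply_one (a b : ℝ) : mk2 a b 1 = b := by
  simp [mk2, WithLp.equiv_symm_apply]

lemma dist_mk2 (a b : ℝ) (q : E2) :
    dist (mk2 a b) q = Real.sqrt ((a - q 0)^2 + (b - q 1)^2) := by
  rw [EuclideanSpace.dist_eq, Fin.sum_univ_two]
  simp [mk2, WithLp.equiv_symm_apply, Real.dist_eq, sq_abs]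

lemma dist_mk2_mk2 (a b a' b' : ℝ) :
    dist (mk2 a b) (mk2 a' b') = Real.sqrt ((a - a')^2 + (b - b')^2) := by
  rw [dist_mk2, mk2_apply_zero, mk2_apply_one]

lemma aux_cs (a b x y : ℝ) (h : a^2 + b^2 = 1) : a*x + b*y ≤ Real.sqrt (x^2 + y^2) := by
  have h0 : (0:ℝ) ≤ x^2 + y^2 := by positivity
  nlinarith [sq_nonneg (a*y - b*x), Real.sq_sqrt h0, Real.sqrt_nonneg (x^2 + y^2),
    sq_nonneg (Real.sqrt (x^2+y^2) - (a*x + b*y))]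

/-- The Fermat-point inequality for the unit equilateral triangle. -/
lemma fermat (p : E2) :
    Real.sqrt 3 ≤ dist (mk2 0 0) p + dist (mk2 1 0) p + dist (mk2 (1/2) (Real.sqrt 3 / 2)) p := by
  have hr : Real.sqrt 3 ^ 2 = 3 := Real.sq_sqrt (by norm_num)
  have hr0 : (0:ℝ) ≤ Real.sqrt 3 := Real.sqrt_nonneg 3
  set x0 := p 0; set y0 := p 1
  have h1 : (-(Real.sqrt 3)/2) * (0 - x0) + (-(1:ℝ)/2) * (0 - y0)
      ≤ dist (mk2 0 0) p := by
    rw [dist_mk2]; exact aux_cs _ _ _ _ (by nlinarith)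
  have h2 : (Real.sqrt 3/2) * (1 - x0) + (-(1:ℝ)/2) * (0 - y0)
      ≤ dist (mk2 1 0) p := by
    rw [dist_mk2]; exact aux_cs _ _ _ _ (by nlinarith)
  have h3 : (0:ℝ) * (1/2 - x0) + (1:ℝ) * (Real.sqrt 3 / 2 - y0)
      ≤ dist (mk2 (1/2) (Real.sqrt 3 / 2)) p := by
    rw [dist_mk2]; exact aux_cs _ _ _ _ (by norm_num)
  nlinarith [h1, h2, h3]

lemma dist_AB : dist (mk2 0 0) (mk2 1 0) = 1 := by
  rw [dist_mk2_mk2]; norm_num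

lemma dist_CA : dist (mk2 (1/2) (Real.sqrt 3 / 2)) (mk2 0 0) = 1 := by
  rw [dist_mk2_mk2]
  have hr : Real.sqrt 3 ^ 2 = 3 := Real.sq_sqrt (by norm_num)
  rw [show (1/2 - 0:ℝ)^2 + (Real.sqrt 3 / 2 - 0)^2 = 1 by nlinarith]
  exact Real.sqrt_one

/-- Part (i): the Steiner lower bound. -/
theorem lower_bound (S : Set E2) (hcomp : IsCompact S) (hconn : IsConnected S)
    (hsub : trianglePts ⊆ S) : ENNReal.ofReal (Real.sqrt 3) ≤ μH[1] S := by
  rcases eq_or_ne (μH[1] S) ⊤ with htop | htop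
  · rw [htop]; exact le_top
  have hA : mk2 0 0 ∈ S := hsub (by left; rfl)
  have hB : mk2 1 0 ∈ S := hsub (by right; left; rfl)
  have hC : mk2 (1/2) (Real.sqrt 3 / 2) ∈ S := hsub (by right; right; rfl)
  have hne : S.Nonempty := ⟨_, hA⟩
  have hpre := hconn.isPreconnected
  -- injective path from A to B
  obtain ⟨γ, hγc, hγ0, hγ1, hγS, hγinj⟩ :=
    exists_injective_path hpre hcomp htop hne hA hB (by rw [dist_AB])
  set Γ : Set E2 := γ '' Icc 0 1 with hΓ
  have hΓcomp : IsCompact Γ := isCompact_Icc.image hγc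
  -- path from C to A
  obtain ⟨η, hηc, hη0, hη1, hηS, _⟩ :=
    exists_injective_path hpre hcomp htop hne hC hA (by rw [dist_CA])
  -- first hitting time of Γ
  set T : Set ℝ := Icc 0 1 ∩ η ⁻¹' Γ with hT
  have hTc : IsClosed T := isClosed_Icc.inter (hΓcomp.isClosed.preimage hηc)
  have hTne : T.Nonempty := ⟨1, ⟨by norm_num, by norm_num⟩, ⟨0, ⟨le_rfl, by norm_num⟩, hγ0.trans hη1.symm⟩⟩
  have hTbd : BddBelow T := ⟨0, fun t ht => ht.1.1⟩
  set τ := sInf T with hτ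
  have hτT : τ ∈ T := hTc.csInf_mem hTne hTbd
  have hτmem : τ ∈ Icc (0:ℝ) 1 := hτT.1
  obtain ⟨s, hs, hsp⟩ := hτT.2
  set p := η τ with hp
  -- the three pieces
  set X : Set E2 := γ '' Icc 0 s with hX
  set Y : Set E2 := γ '' Icc s 1 with hY
  set Z : Set E2 := η '' Icc 0 τ with hZ
  have hXp : IsPreconnected X := (isPreconnected_Icc).image _ hγc.continuousOn
  have hYp : IsPreconnected Y := (isPreconnected_Icc).image _ hγc.continuousOn
  have hZp : IsPreconnected Z := (isPreconnected_Icc).image _ hηc.continuousOn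
  have hAX : mk2 0 0 ∈ X := ⟨0, ⟨le_rfl, hs.1⟩, hγ0⟩
  have hBY : mk2 1 0 ∈ Y := ⟨1, ⟨hs.2, le_rfl⟩, hγ1⟩
  have hCZ : mk2 (1/2) (Real.sqrt 3 / 2) ∈ Z := ⟨0, ⟨le_rfl, hτmem.1⟩, hη0⟩
  have hpX : p ∈ X := ⟨s, ⟨hs.1, le_rfl⟩, hsp⟩
  have hpY : p ∈ Y := ⟨s, ⟨le_rfl, hs.2⟩, hsp⟩
  have hpZ : p ∈ Z := ⟨τ, ⟨hτmem.1, le_rfl⟩, rfl⟩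
  -- numbered subsets of S
  have hXS : X ⊆ S := by rintro _ ⟨t, ht, rfl⟩; exact hγS t
  have hYS : Y ⊆ S := by rintro _ ⟨t, ht, rfl⟩; exact hγS t
  have hZS : Z ⊆ S := by rintro _ ⟨t, ht, rfl⟩; exact hηS t
  -- intersections are contained in {p}
  have hXY : X ∩ Y ⊆ {p} := by
    rintro w ⟨⟨u, hu, huw⟩, ⟨v, hv, hvw⟩⟩
    have huv : u = v := hγinj ⟨hu.1, hu.2.trans hs.2⟩ ⟨hs.1.trans hv.1, hv.2⟩
      (huw.trans hvw.symm)
    have hus : u = s := le_antisymm hu.2 (huv ▸ hv.1)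
    simp only [mem_singleton_iff, ← huw, hus, hsp]
  have hZΓ : Z ∩ (X ∪ Y) ⊆ {p} := by
    rintro w ⟨⟨t, ht, htw⟩, hwΓ⟩
    have hwΓ' : w ∈ Γ := by
      rcases hwΓ with h | h
      · obtain ⟨u, hu, huw⟩ := h; exact ⟨u, ⟨hu.1, hu.2.trans hs.2⟩, huw⟩
      · obtain ⟨u, hu, huw⟩ := h; exact ⟨u, ⟨hs.1.trans hu.1, hu.2⟩, huw⟩
    have htT : t ∈ T := ⟨⟨ht.1, ht.2.trans hτmem.2⟩, by rw [mem_preimage, htw]; exact hwΓ'⟩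
    have : τ ≤ t := csInf_le hTbd htT
    have ht_eq : t = τ := le_antisymm ht.2 this
    simp only [mem_singleton_iff, ← htw, ht_eq, hp]
  -- measure estimates
  haveI : NoAtoms (μH[1] : Measure E2) := Measure.noAtoms_hausdorff E2 one_pos
  have hp0 : μH[1] ({p} : Set E2) = 0 := (Measure.nullSingletonClass_hausdorff E2 one_pos).measure_singleton p
  have hXm : MeasurableSet (X \ {p}) :=
    ((isCompact_Icc.image hγc).isClosed.measurableSet).diff (measurableSet_singleton p)
  have hYm : MeasurableSet (Y \ {p}) :=
    ((isCompact_Icc.image hγc).isClosed.measurableSet).diff (measurableSet_singleton p)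
  have hZm : MeasurableSet (Z \ {p}) :=
    ((isCompact_Icc.image hηc).isClosed.measurableSet).diff (measurableSet_singleton p)
  have hdXY : Disjoint (X \ {p}) (Y \ {p}) := by
    rw [Set.disjoint_left]
    rintro w ⟨hwX, hwp⟩ ⟨hwY, _⟩
    exact hwp (hXY ⟨hwX, hwY⟩)
  have hdZ : Disjoint (Z \ {p}) ((X \ {p}) ∪ (Y \ {p})) := by
    rw [Set.disjoint_left]
    rintro w ⟨hwZ, hwp⟩ hw
    have : w ∈ X ∪ Y := by
      rcases hw with ⟨h, _⟩ | ⟨h, _⟩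
      · exact Or.inl h
      · exact Or.inr h
    exact hwp (hZΓ ⟨hwZ, this⟩)
  have hunion_sub : (Z \ {p}) ∪ ((X \ {p}) ∪ (Y \ {p})) ⊆ S := by
    rintro w (⟨h, _⟩ | ⟨h, _⟩ | ⟨h, _⟩)
    exacts [hZS h, hXS h, hYS h]
  have hcalc : μH[1] Z + (μH[1] X + μH[1] Y) ≤ μH[1] S := by
    calc μH[1] Z + (μH[1] X + μH[1] Y)
        = μH[1] (Z \ {p}) + (μH[1] (X \ {p}) + μH[1] (Y \ {p})) := by
          rw [measure_diff_null hp0, measure_diff_null hp0, measure_diff_null hp0]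
      _ = μH[1] ((Z \ {p}) ∪ ((X \ {p}) ∪ (Y \ {p}))) := by
          rw [← measure_union hdXY hYm, ← measure_union hdZ (hXm.union hYm)]
      _ ≤ μH[1] S := measure_mono hunion_sub
  -- distances
  have hdA : edist (mk2 0 0) p ≤ μH[1] X := edist_le_measure hXp hAX hpX
  have hdB : edist (mk2 1 0) p ≤ μH[1] Y := edist_le_measure hYp hBY hpY
  have hdC : edist (mk2 (1/2) (Real.sqrt 3 / 2)) p ≤ μH[1] Z := edist_le_measure hZp hCZ hpZ
  have hsum : ENNReal.ofReal (Real.sqrt 3)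
      ≤ edist (mk2 (1/2) (Real.sqrt 3 / 2)) p + (edist (mk2 0 0) p + edist (mk2 1 0) p) := by
    rw [edist_dist, edist_dist, edist_dist, ← ENNReal.ofReal_add dist_nonneg dist_nonneg,
      ← ENNReal.ofReal_add dist_nonneg (by positivity)]
    apply ENNReal.ofReal_le_ofReal
    linarith [fermat p]
  calc ENNReal.ofReal (Real.sqrt 3)
      ≤ edist (mk2 (1/2) (Real.sqrt 3 / 2)) p + (edist (mk2 0 0) p + edist (mk2 1 0) p) := hsum
    _ ≤ μH[1] Z + (μH[1] X + μH[1] Y) := by gcongr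
    _ ≤ μH[1] S := hcalc

lemma isCompact_seg (x y : E2) : IsCompact (segment ℝ x y) := by
  rw [segment_eq_image_lineMap]
  exact isCompact_Icc.image AffineMap.lineMap_continuous

lemma sqrt3_third : Real.sqrt (1/3) * 3 = Real.sqrt 3 := by
  have : Real.sqrt 3 = Real.sqrt (9 * (1/3)) := by norm_num
  rw [this, Real.sqrt_mul (by norm_num : (0:ℝ) ≤ 9),
    show (9:ℝ) = 3^2 by norm_num, Real.sqrt_sq (by norm_num : (0:ℝ) ≤ 3)]
  ring

/-- Part (ii): the Fermat tree. -/
theorem upper_bound : ∃ S : Set E2, IsCompact S ∧ IsConnected S ∧ trianglePts ⊆ S ∧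
    μH[1] S = ENNReal.ofReal (Real.sqrt 3) := by
  have hr : Real.sqrt 3 ^ 2 = 3 := Real.sq_sqrt (by norm_num)
  set F := mk2 (1/2) (Real.sqrt 3 / 6) with hF
  set A := mk2 0 0
  set B := mk2 1 0
  set C := mk2 (1/2) (Real.sqrt 3 / 2)
  set S : Set E2 := segment ℝ F A ∪ segment ℝ F B ∪ segment ℝ F C with hS
  have hFA : dist F A = Real.sqrt (1/3) := by
    rw [dist_mk2_mk2]; congr 1; nlinarith
  have hFB : dist F B = Real.sqrt (1/3) := by
    rw [dist_mk2_mk2]; congr 1; nlinarith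
  have hFC : dist F C = Real.sqrt (1/3) := by
    rw [dist_mk2_mk2]; congr 1; nlinarith
  refine ⟨S, ?_, ?_, ?_, ?_⟩
  · exact ((isCompact_seg F A).union (isCompact_seg F B)).union (isCompact_seg F C)
  · have c1 : IsConnected (segment ℝ F A) := (convex_segment F A).isConnected ⟨F, left_mem_segment _ _ _⟩
    have c2 : IsConnected (segment ℝ F B) := (convex_segment F B).isConnected ⟨F, left_mem_segment _ _ _⟩
    have c3 : IsConnected (segment ℝ F C) := (convex_segment F C).isConnected ⟨F, left_mem_segment _ _ _⟩
    refine IsConnected.union ⟨F, ?_⟩ (IsConnected.union ⟨F, ?_, ?_⟩ c1 c2) c3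
    · exact ⟨Or.inl (left_mem_segment _ _ _), left_mem_segment _ _ _⟩
    · exact left_mem_segment _ _ _
    · exact left_mem_segment _ _ _
  · intro w hw
    rcases hw with h | h | h
    · exact Or.inl (Or.inl (h ▸ right_mem_segment _ _ _))
    · exact Or.inl (Or.inr (h ▸ right_mem_segment _ _ _))
    · exact Or.inr (h ▸ right_mem_segment _ _ _)
  · refine le_antisymm ?_ ?_
    · calc μH[1] S ≤ μH[1] (segment ℝ F A ∪ segment ℝ F B) + μH[1] (segment ℝ F C) :=
            measure_union_le _ _
        _ ≤ μH[1] (segment ℝ F A) + μH[1] (segment ℝ F B) + μH[1] (segment ℝ F C) := by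
            gcongr; exact measure_union_le _ _
        _ = ENNReal.ofReal (Real.sqrt 3) := by
            rw [hausdorffMeasure_segment, hausdorffMeasure_segment, hausdorffMeasure_segment,
              edist_dist, edist_dist, edist_dist, hFA, hFB, hFC,
              ← ENNReal.ofReal_add (Real.sqrt_nonneg _) (Real.sqrt_nonneg _),
              ← ENNReal.ofReal_add (by positivity) (Real.sqrt_nonneg _)]
            rw [show Real.sqrt (1/3) + Real.sqrt (1/3) + Real.sqrt (1/3)
                = Real.sqrt (1/3) * 3 by ring, sqrt3_third]
    · apply lower_bound S
      · exact ((isCompact_seg F A).union (isCompact_seg F B)).union (isCompact_seg F C)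
      · have c1 : IsConnected (segment ℝ F A) := (convex_segment F A).isConnected ⟨F, left_mem_segment _ _ _⟩
        have c2 : IsConnected (segment ℝ F B) := (convex_segment F B).isConnected ⟨F, left_mem_segment _ _ _⟩
        have c3 : IsConnected (segment ℝ F C) := (convex_segment F C).isConnected ⟨F, left_mem_segment _ _ _⟩
        refine IsConnected.union ⟨F, ?_⟩ (IsConnected.union ⟨F, ?_, ?_⟩ c1 c2) c3
        · exact ⟨Or.inl (left_mem_segment _ _ _), left_mem_segment _ _ _⟩
        · exact left_mem_segment _ _ _
        · exact left_mem_segment _ _ _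
      · intro w hw
        rcases hw with h | h | h
        · exact Or.inl (Or.inl (h ▸ right_mem_segment _ _ _))
        · exact Or.inl (Or.inr (h ▸ right_mem_segment _ _ _))
        · exact Or.inr (h ▸ right_mem_segment _ _ _)

end
end SteinerAux

theorem steiner_tree_equilateral_triangle :
    (∀ S : Set (EuclideanSpace ℝ (Fin 2)), IsCompact S → IsConnected S → trianglePts ⊆ S →
      ENNReal.ofReal (Real.sqrt 3) ≤ μH[1] S) ∧
    (∃ S : Set (EuclideanSpace ℝ (Fin 2)), IsCompact S ∧ IsConnected S ∧ trianglePts ⊆ S ∧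
      μH[1] S = ENNReal.ofReal (Real.sqrt 3)) := by
  exact ⟨fun S h1 h2 h3 => SteinerAux.lower_bound S h1 h2 h3, SteinerAux.upper_bound⟩
end

section
/- For every finite nonempty set P ⊆ [0,1]² ⊆ ℝ² with #P = n, there exists a compact connected set S ⊆ ℝ² with P ⊆ S and H¹(S) ≤ √(2n) + 7/4. (In particular, the maximal possible length L(n) of a Steiner tree for n points in the unit square grows at most like a constant times √n.) -/
open MeasureTheory Metric Set
open scoped ENNReal NNReal

/-- The closed unit square `[0,1]² ⊆ ℝ²`. -/
def unitSquare : Set (EuclideanSpace ℝ (Fin 2)) :=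
  {x | ∀ i, x i ∈ Set.Icc (0 : ℝ) 1}

noncomputable abbrev stPt (a b : ℝ) : EuclideanSpace ℝ (Fin 2) := !₂[a, b]

lemma stPt_dist_vert (a b c : ℝ) : dist (stPt a b) (stPt a c) = |b - c| := by
  rw [EuclideanSpace.dist_eq]
  simp [Fin.sum_univ_two, Real.dist_eq, Real.sqrt_sq_eq_abs]

lemma stPt_dist_horiz (a b c : ℝ) : dist (stPt a c) (stPt b c) = |a - b| := by
  rw [EuclideanSpace.dist_eq]
  simp [Fin.sum_univ_two, Real.dist_eq, Real.sqrt_sq_eq_abs]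

lemma stPt_dist_self (p : EuclideanSpace ℝ (Fin 2)) (y : ℝ) :
    dist p (stPt (p 0) y) = |p 1 - y| := by
  rw [EuclideanSpace.dist_eq]
  simp [Fin.sum_univ_two, Real.dist_eq, Real.sqrt_sq_eq_abs]

lemma stSeg_measure (x y : EuclideanSpace ℝ (Fin 2)) :
    μH[1] (segment ℝ x y) = ENNReal.ofReal (dist x y) := by
  rw [hausdorffMeasure_segment, edist_dist]

lemma stSeg_compact (x y : EuclideanSpace ℝ (Fin 2)) : IsCompact (segment ℝ x y) := by
  rw [segment_eq_image]
  exact (isCompact_Icc).image (by continuity)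

lemma stSeg_connected (x y : EuclideanSpace ℝ (Fin 2)) : IsConnected (segment ℝ x y) :=
  ⟨⟨x, left_mem_segment ℝ x y⟩, (convex_segment x y).isPreconnected⟩

lemma stCombo_vert (a b c t : ℝ) :
    (1-t) • stPt a b + t • stPt a c = stPt a ((1-t)*b + t*c) := by
  ext i
  fin_cases i <;> simp <;> ring

lemma stCombo_horiz (a b c t : ℝ) :
    (1-t) • stPt a c + t • stPt b c = stPt ((1-t)*a + t*b) c := by
  ext i
  fin_cases i <;> simp <;> ring

lemma stMem_segment {x y : EuclideanSpace ℝ (Fin 2)} {t : ℝ} (h0 : 0 ≤ t) (h1 : t ≤ 1) :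
    (1-t) • x + t • y ∈ segment ℝ x y :=
  ⟨1-t, t, by linarith, h0, by ring, rfl⟩

set_option maxHeartbeats 2000000 in
theorem steiner_tree_in_square_upper_bound (n : ℕ)
    (P : Finset (EuclideanSpace ℝ (Fin 2))) (hPne : P.Nonempty)
    (hPsq : ↑P ⊆ unitSquare) (hcard : P.card = n) :
    ∃ S : Set (EuclideanSpace ℝ (Fin 2)), IsCompact S ∧ IsConnected S ∧ ↑P ⊆ S ∧
      μH[1] S ≤ ENNReal.ofReal (Real.sqrt (2 * n) + 7 / 4) := by
  classical
  have hn1 : 1 ≤ n := hcard ▸ Finset.card_pos.2 hPne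
  set s : ℝ := Real.sqrt (n / 2) with hs_def
  have hn2 : (0:ℝ) < (n:ℝ) / 2 := by
    have : (1:ℝ) ≤ (n:ℝ) := by exact_mod_cast hn1
    linarith
  have hs_pos : 0 < s := Real.sqrt_pos.2 hn2
  have hs_sq : s ^ 2 = (n:ℝ) / 2 := Real.sq_sqrt hn2.le
  set k : ℕ := ⌈s⌉₊ with hk_def
  have hk1 : 1 ≤ k := Nat.one_le_iff_ne_zero.2 (by
    simp only [hk_def, ne_eq, Nat.ceil_eq_zero, not_le]
    exact hs_pos)
  set K : ℝ := (k : ℝ) with hK_def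
  have hK1 : (1:ℝ) ≤ K := by rw [hK_def]; exact_mod_cast hk1
  have hK0 : (0:ℝ) < K := by linarith
  have hsK : s ≤ K := Nat.le_ceil s
  have hKs : K < s + 1 := Nat.ceil_lt_add_one hs_pos.le
  have hkK : ((k - 1 : ℕ) : ℝ) = K - 1 := by
    rw [Nat.cast_sub hk1]; simp [hK_def]
  -- heights of the horizontal lines
  set hgt : ℕ → ℝ := fun j => (2 * (j:ℝ) + 1) / (2 * K) with hgt_def
  -- pieces of the comb
  set spine : Set (EuclideanSpace ℝ (Fin 2)) :=
    segment ℝ (stPt (1/2) (hgt 0)) (stPt (1/2) (hgt (k-1))) with spine_def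
  set line : ℕ → Set (EuclideanSpace ℝ (Fin 2)) :=
    fun j => segment ℝ (stPt 0 (hgt j)) (stPt 1 (hgt j)) with line_def
  set jp : EuclideanSpace ℝ (Fin 2) → ℕ := fun p => min ⌊K * p 1⌋₊ (k-1) with jp_def
  set tooth : EuclideanSpace ℝ (Fin 2) → Set (EuclideanSpace ℝ (Fin 2)) :=
    fun p => segment ℝ p (stPt (p 0) (hgt (jp p))) with tooth_def
  set S : Set (EuclideanSpace ℝ (Fin 2)) :=
    (spine ∪ ⋃ j : Fin k, line j) ∪ ⋃ p ∈ P, tooth p with S_def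
  -- basic membership facts
  have hjp_le : ∀ p, jp p ≤ k - 1 := fun p => min_le_right _ _
  have hjp_band : ∀ p ∈ P, (jp p : ℝ) / K ≤ p 1 ∧ p 1 ≤ ((jp p : ℝ) + 1) / K := by
    intro p hp
    have hy0 : 0 ≤ p 1 := (hPsq hp 1).1
    have hy1 : p 1 ≤ 1 := (hPsq hp 1).2
    by_cases hc : ⌊K * p 1⌋₊ ≤ k - 1
    · have hjp : jp p = ⌊K * p 1⌋₊ := min_eq_left hc
      have h1 : (⌊K * p 1⌋₊ : ℝ) ≤ K * p 1 := Nat.floor_le (by positivity)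
      have h2 : K * p 1 < (⌊K * p 1⌋₊ : ℝ) + 1 := Nat.lt_floor_add_one _
      rw [hjp]
      constructor
      · rw [div_le_iff₀ hK0]; linarith [h1]
      · rw [le_div_iff₀ hK0]; linarith [h2]
    · have hjp : jp p = k - 1 := min_eq_right (by omega)
      push_neg at hc
      have hkc : k ≤ ⌊K * p 1⌋₊ := by omega
      have h1 : (k : ℝ) ≤ K * p 1 := by
        exact_mod_cast (Nat.le_floor_iff (by positivity)).1 hkc
      have hp1 : p 1 = 1 := by
        have : K ≤ K * p 1 := by rw [hK_def] at h1 ⊢; exact h1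
        nlinarith
      rw [hjp, hkK, hp1]
      constructor
      · rw [div_le_iff₀ hK0]; linarith
      · rw [le_div_iff₀ hK0]; linarith
  have hjp_dist : ∀ p ∈ P, |p 1 - hgt (jp p)| ≤ 1 / (2 * K) := by
    intro p hp
    obtain ⟨hb1, hb2⟩ := hjp_band p hp
    rw [div_le_iff₀ hK0] at hb1
    rw [le_div_iff₀ hK0] at hb2
    have h2K : (0:ℝ) < 2*K := by linarith
    have key : |p 1 - (2*((jp p):ℝ)+1)/(2*K)| ≤ 1/(2*K) := by
      have heq : p 1 - (2*((jp p):ℝ)+1)/(2*K)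
          = (p 1 * (2*K) - (2*((jp p):ℝ)+1))/(2*K) := by
        field_simp
      rw [heq, abs_div, abs_of_pos h2K, div_le_div_iff_of_pos_right h2K, abs_le]
      constructor <;> nlinarith
    simpa only [hgt_def] using key
  -- the crossing points of each line with the spine
  have hcross_spine : ∀ j : Fin k, stPt (1/2) (hgt j) ∈ spine := by
    intro j
    have hjlt := j.isLt
    have hj : (j : ℕ) ≤ k - 1 := by omega
    set t : ℝ := (j : ℝ) / (K - 1) with ht_def
    have htk : t * (K - 1) = (j : ℝ) := by
      rcases eq_or_lt_of_le hK1 with h | h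
      · have hke : k = 1 := by rw [hK_def] at h; exact_mod_cast h.symm
        have hj0 : (j : ℕ) = 0 := by omega
        simp [ht_def, hj0, ← h]
      · rw [ht_def]; exact div_mul_cancel₀ _ (ne_of_gt (by linarith : (0:ℝ) < K - 1))
    have ht0 : 0 ≤ t := div_nonneg (Nat.cast_nonneg _) (by linarith)
    have ht1 : t ≤ 1 := by
      rcases eq_or_lt_of_le hK1 with h | h
      · have hke : k = 1 := by rw [hK_def] at h; exact_mod_cast h.symm
        have hj0 : (j : ℕ) = 0 := by omega
        simp [ht_def, hj0]
      · rw [ht_def, div_le_one (by linarith)]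
        have : ((j:ℕ) : ℝ) ≤ ((k - 1 : ℕ) : ℝ) := by exact_mod_cast hj
        rw [hkK] at this; exact this
    have := stMem_segment (x := stPt (1/2) (hgt 0)) (y := stPt (1/2) (hgt (k-1))) ht0 ht1
    rw [stCombo_vert] at this
    have heq : (1 - t) * hgt 0 + t * hgt (k-1) = hgt j := by
      rw [hgt_def]
      simp only [Nat.cast_zero, hkK]
      field_simp
      nlinarith [htk]
    rw [heq] at this
    exact this
  have hcross_line : ∀ j : Fin k, stPt (1/2) (hgt j) ∈ line j := by
    intro j
    have := stMem_segment (x := stPt 0 (hgt j)) (y := stPt 1 (hgt j))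
      (t := 1/2) (by norm_num) (by norm_num)
    rw [stCombo_horiz] at this
    have heq : ((1:ℝ)-1/2)*0 + (1/2)*1 = 1/2 := by norm_num
    rw [heq] at this
    exact this
  have hfoot_line : ∀ p ∈ P, stPt (p 0) (hgt (jp p)) ∈ line (jp p) := by
    intro p hp
    have hx0 : 0 ≤ p 0 := (hPsq hp 0).1
    have hx1 : p 0 ≤ 1 := (hPsq hp 0).2
    have := stMem_segment (x := stPt 0 (hgt (jp p))) (y := stPt 1 (hgt (jp p)))
      (t := p 0) hx0 hx1
    rw [stCombo_horiz] at this
    convert this using 2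
    ring
  have hjp_lt : ∀ p, jp p < k := fun p => by
    have := hjp_le p; omega
  -- the hub point
  set a : EuclideanSpace ℝ (Fin 2) := stPt (1/2) (hgt 0) with a_def
  have ha_spine : a ∈ spine := left_mem_segment ℝ _ _
  -- connectivity
  have hT : IsConnected (spine ∪ ⋃ j : Fin k, line j) := by
    have : (spine ∪ ⋃ j : Fin k, line j) = ⋃ j : Fin k, (spine ∪ line j) := by
      haveI : Nonempty (Fin k) := ⟨⟨0, hk1⟩⟩
      rw [← Set.union_iUnion]
    rw [this]
    refine ⟨⟨a, Set.mem_iUnion.2 ⟨⟨0, hk1⟩, Or.inl ha_spine⟩⟩, ?_⟩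
    apply isPreconnected_iUnion
    · exact ⟨a, Set.mem_iInter.2 fun j => Or.inl ha_spine⟩
    · intro j
      exact ((stSeg_connected _ _).union
        ⟨stPt (1/2) (hgt j), hcross_spine j, hcross_line j⟩ (stSeg_connected _ _)).isPreconnected
  have hS_eq : S = ⋃ p ∈ (P : Set (EuclideanSpace ℝ (Fin 2))), ((spine ∪ ⋃ j : Fin k, line j) ∪ tooth p) := by
    ext x
    simp only [S_def, Set.mem_union, Set.mem_iUnion, Finset.mem_coe]
    constructor
    · rintro (hx | ⟨p, hp, hx⟩)
      · obtain ⟨p0, hp0⟩ := hPne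
        exact ⟨p0, hp0, Or.inl hx⟩
      · exact ⟨p, hp, Or.inr hx⟩
    · rintro ⟨p, hp, hx | hx⟩
      · exact Or.inl hx
      · exact Or.inr ⟨p, hp, hx⟩
  have hS_conn : IsConnected S := by
    rw [hS_eq]
    obtain ⟨p0, hp0⟩ := hPne
    refine ⟨⟨a, Set.mem_iUnion.2 ⟨p0, Set.mem_iUnion.2 ⟨hp0, Or.inl (Or.inl ha_spine)⟩⟩⟩, ?_⟩
    rw [Set.biUnion_eq_iUnion]
    apply isPreconnected_iUnion
    · exact ⟨a, Set.mem_iInter.2 fun ⟨p, hp⟩ => Or.inl (Or.inl ha_spine)⟩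
    · rintro ⟨p, hp⟩
      refine (hT.union ?_ (stSeg_connected _ _)).isPreconnected
      refine ⟨stPt (p 0) (hgt (jp p)), ?_, right_mem_segment ℝ _ _⟩
      exact Or.inr (Set.mem_iUnion.2 ⟨⟨jp p, hjp_lt p⟩, hfoot_line p hp⟩)
  -- compactness
  have hS_cpt : IsCompact S := by
    refine ((stSeg_compact _ _).union ?_).union ?_
    · exact isCompact_iUnion fun j => stSeg_compact _ _
    · exact P.finite_toSet.isCompact_biUnion fun p _ => stSeg_compact _ _
  -- P ⊆ S
  have hP_sub : ↑P ⊆ S := by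
    intro p hp
    exact Or.inr (Set.mem_biUnion hp (left_mem_segment ℝ _ _))
  -- measure bound
  have hspine_m : μH[1] spine = ENNReal.ofReal (1 - 1/K) := by
    rw [spine_def, stSeg_measure, stPt_dist_vert]
    congr 1
    rw [hgt_def]
    simp only [Nat.cast_zero, hkK]
    rw [abs_of_nonpos (by
      rw [sub_nonpos, div_le_div_iff₀ (by positivity) (by positivity)]
      nlinarith)]
    field_simp
    ring
  have hline_m : ∀ j : ℕ, μH[1] (line j) = ENNReal.ofReal 1 := by
    intro j
    rw [line_def]
    simp only
    rw [stSeg_measure, stPt_dist_horiz]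
    norm_num
  have htooth_m : ∀ p ∈ P, μH[1] (tooth p) ≤ ENNReal.ofReal (1/(2*K)) := by
    intro p hp
    rw [tooth_def]
    simp only
    rw [stSeg_measure, stPt_dist_self]
    exact ENNReal.ofReal_le_ofReal (hjp_dist p hp)
  have hmeas : μH[1] S ≤ ENNReal.ofReal (1 - 1/K) + (k : ℝ≥0∞) * ENNReal.ofReal 1
      + (n : ℝ≥0∞) * ENNReal.ofReal (1/(2*K)) := by
    refine le_trans (measure_union_le _ _) ?_
    gcongr
    · refine le_trans (measure_union_le _ _) ?_
      gcongr
      · exact hspine_m.le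
      · refine le_trans (measure_iUnion_fintype_le _ _) (le_of_eq ?_)
        calc (∑ j : Fin k, μH[1] (line ↑j)) = ∑ _j : Fin k, ENNReal.ofReal 1 := by
              exact Finset.sum_congr rfl fun j _ => hline_m j
          _ = (k : ℝ≥0∞) * ENNReal.ofReal 1 := by
              rw [Finset.sum_const, Finset.card_univ, Fintype.card_fin, nsmul_eq_mul]
    · refine le_trans (measure_biUnion_finset_le _ _) ?_
      calc (∑ p ∈ P, μH[1] (tooth p)) ≤ ∑ _p ∈ P, ENNReal.ofReal (1/(2*K)) :=
            Finset.sum_le_sum htooth_m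
        _ = (n : ℝ≥0∞) * ENNReal.ofReal (1/(2*K)) := by
            rw [Finset.sum_const, hcard, nsmul_eq_mul]
  refine ⟨S, hS_cpt, hS_conn, hP_sub, ?_⟩
  refine hmeas.trans ?_
  have e1 : (k : ℝ≥0∞) * ENNReal.ofReal 1 = ENNReal.ofReal K := by
    rw [ENNReal.ofReal_one, mul_one, hK_def, ENNReal.ofReal_natCast]
  have e2 : (n : ℝ≥0∞) * ENNReal.ofReal (1/(2*K)) = ENNReal.ofReal ((n:ℝ)/(2*K)) := by
    rw [← ENNReal.ofReal_natCast n, ← ENNReal.ofReal_mul (by positivity)]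
    congr 1
    ring
  have hKinv : 1/K ≤ 1 := by rw [div_le_one hK0]; exact hK1
  rw [e1, e2, ← ENNReal.ofReal_add (by linarith) (by positivity),
    ← ENNReal.ofReal_add (by linarith) (by positivity)]
  apply ENNReal.ofReal_le_ofReal
  -- final arithmetic
  have h2s : Real.sqrt (2 * n) = 2 * s := by
    rw [hs_def, show (2 * (n:ℝ)) = 4 * ((n:ℝ)/2) by ring,
      Real.sqrt_mul (by norm_num) , show (4:ℝ) = 2^2 by norm_num, Real.sqrt_sq (by norm_num)]
  rw [h2s]
  have hfin : K - 1 + K^2 + s^2 ≤ (2*s + 7/4) * K := by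
    nlinarith [mul_nonneg (sub_nonneg.2 hsK) (sub_nonneg.2 hsK),
      mul_nonpos_of_nonneg_of_nonpos (sub_nonneg.2 hsK) (by linarith : K - s - 1 ≤ 0)]
  have hns : (n:ℝ) = 2 * s^2 := by rw [hs_sq]; ring
  calc 1 - 1/K + K + (n:ℝ)/(2*K) = (K - 1 + K^2 + s^2)/K := by
        rw [hns]; field_simp
    _ ≤ ((2*s + 7/4) * K)/K := by gcongr
    _ = 2*s + 7/4 := by field_simp
end

section
/- There exists a constant c > 0 such that for every integer n ≥ 1 there exists a set P ⊆ [0,1]² ⊆ ℝ² with #P = n such that every compact connected set S ⊆ ℝ² with P ⊆ S satisfies H¹(S) ≥ c · (√n − 1). (In particular, the maximal possible length of a Steiner tree for n points in the unit square grows at least like a constant times √n.) -/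
open MeasureTheory Metric Set

/-- A grid point `(i/m, j/m)`. -/
noncomputable def gpt (m i j : ℕ) : EuclideanSpace ℝ (Fin 2) :=
  (WithLp.equiv 2 (Fin 2 → ℝ)).symm ![(i:ℝ)/m, (j:ℝ)/m]

/-- If a connected set contains `x` and a point at distance at least `r` from `x`,
then its part inside `ball x r` has `H¹`-measure at least `r`. -/
lemma crossing_lemma {E : Type*} [MetricSpace E] [MeasurableSpace E] [BorelSpace E]
    {S : Set E} (hS : IsConnected S) {x y : E} (hx : x ∈ S) (hy : y ∈ S)
    {r : ℝ} (hd : r ≤ dist x y) :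
    ENNReal.ofReal r ≤ μH[1] (S ∩ Metric.ball x r) := by
  set f : E → ℝ := fun z => dist x z with hf
  have hlip : LipschitzWith 1 f := LipschitzWith.dist_right x
  have hconn : IsPreconnected (f '' S) :=
    (hS.image f hlip.continuous.continuousOn).isPreconnected
  have h0 : (0 : ℝ) ∈ f '' S := ⟨x, hx, by simp [hf]⟩
  have hyy : dist x y ∈ f '' S := ⟨y, hy, rfl⟩
  have hIcc : Set.Icc (0 : ℝ) (dist x y) ⊆ f '' S := hconn.Icc_subset h0 hyy
  have hIco : Set.Ico (0 : ℝ) r ⊆ f '' (S ∩ Metric.ball x r) := by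
    intro t ht
    obtain ⟨z, hzS, hzt⟩ := hIcc ⟨ht.1, le_trans (le_of_lt ht.2) hd⟩
    refine ⟨z, ⟨hzS, ?_⟩, hzt⟩
    rw [Metric.mem_ball, dist_comm]
    exact lt_of_eq_of_lt hzt ht.2
  calc ENNReal.ofReal r = μH[1] (Set.Ico (0:ℝ) r) := by
        rw [MeasureTheory.hausdorffMeasure_real, Real.volume_Ico, sub_zero]
    _ ≤ μH[1] (f '' (S ∩ Metric.ball x r)) := measure_mono hIco
    _ ≤ ((1 : NNReal) : ENNReal) ^ (1:ℝ) * μH[1] (S ∩ Metric.ball x r) :=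
        hlip.hausdorffMeasure_image_le zero_le_one _
    _ = μH[1] (S ∩ Metric.ball x r) := by simp

/-- Distinct grid points are at distance at least `1/m`. -/
lemma gpt_dist {m i j i' j' : ℕ} (hm : 0 < m) (hne : (i, j) ≠ (i', j')) :
    1 / (m : ℝ) ≤ dist (gpt m i j) (gpt m i' j') := by
  have hm0 : (0:ℝ) < m := by exact_mod_cast hm
  have h1 : ∀ a b : ℕ, a ≠ b → (1 / (m:ℝ))^2 ≤ ((a:ℝ)/m - b/m)^2 := by
    intro a b hab
    have habs : (1:ℝ) ≤ |(a:ℝ) - b| := by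
      have hz : (1:ℤ) ≤ |(a:ℤ) - b| := Int.one_le_abs (by omega)
      calc (1:ℝ) ≤ |((a:ℤ) - b : ℤ)| := by exact_mod_cast hz
        _ = |(a:ℝ) - b| := by push_cast; rfl
    have h2 : (1:ℝ) ≤ ((a:ℝ) - b)^2 := by
      calc (1:ℝ) = 1^2 := by ring
        _ ≤ |(a:ℝ) - b|^2 := by apply pow_le_pow_left₀ (by norm_num) habs
        _ = ((a:ℝ) - b)^2 := sq_abs _
    have he : ((a:ℝ)/m - b/m)^2 = ((a:ℝ) - b)^2 * (1/m)^2 := by ring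
    rw [he]
    nlinarith [sq_nonneg (1/(m:ℝ))]
  have key : (1 / (m:ℝ))^2 ≤ ((i:ℝ)/m - i'/m)^2 + ((j:ℝ)/m - j'/m)^2 := by
    by_cases hii : i = i'
    · subst hii
      have hjj : j ≠ j' := by simpa using hne
      simpa using h1 j j' hjj
    · have := h1 i i' hii
      nlinarith [sq_nonneg ((j:ℝ)/m - j'/m)]
  rw [EuclideanSpace.dist_eq]
  have e1 : 1/(m:ℝ) = Real.sqrt ((1/m)^2) := (Real.sqrt_sq (by positivity)).symm
  rw [e1]
  apply Real.sqrt_le_sqrt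
  rw [Fin.sum_univ_two, show gpt m i j 0 = (i:ℝ)/m from rfl,
    show gpt m i j 1 = (j:ℝ)/m from rfl, show gpt m i' j' 0 = (i':ℝ)/m from rfl,
    show gpt m i' j' 1 = (j':ℝ)/m from rfl, Real.dist_eq, Real.dist_eq, sq_abs, sq_abs]
  exact key

theorem steiner_tree_in_square_lower_bound :
    ∃ c : ℝ, 0 < c ∧ ∀ n : ℕ, 1 ≤ n →
      ∃ P : Finset (EuclideanSpace ℝ (Fin 2)), ↑P ⊆ unitSquare ∧ P.card = n ∧
        ∀ S : Set (EuclideanSpace ℝ (Fin 2)), IsCompact S → IsConnected S → ↑P ⊆ S →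
          ENNReal.ofReal (c * (Real.sqrt n - 1)) ≤ μH[1] S := by
  classical
  refine ⟨1/2, by norm_num, fun n hn => ?_⟩
  set m : ℕ := n.sqrt + 1 with hmdef
  have hm : 0 < m := Nat.succ_pos _
  have hm0 : (0:ℝ) < m := by exact_mod_cast hm
  have hnm : n ≤ m * m := by
    have := Nat.lt_succ_sqrt' n
    simpa [hmdef, pow_two] using this.le
  -- the grid
  set G : Finset (EuclideanSpace ℝ (Fin 2)) :=
    (Finset.range m ×ˢ Finset.range m).image (fun p => gpt m p.1 p.2) with hG
  have hGcard : G.card = m * m := by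
    rw [hG, Finset.card_image_of_injOn, Finset.card_product, Finset.card_range]
    intro p _ q _ hpq
    have h0 : (p.1 : ℝ)/m = (q.1 : ℝ)/m := congrArg (fun x : EuclideanSpace ℝ (Fin 2) => x 0) hpq
    have h1 : (p.2 : ℝ)/m = (q.2 : ℝ)/m := congrArg (fun x : EuclideanSpace ℝ (Fin 2) => x 1) hpq
    have e0 : (p.1 : ℝ) = q.1 := by
      field_simp at h0; exact_mod_cast h0
    have e1 : (p.2 : ℝ) = q.2 := by
      field_simp at h1; exact_mod_cast h1
    exact Prod.ext (by exact_mod_cast e0) (by exact_mod_cast e1)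
  obtain ⟨P, hPG, hPcard⟩ := Finset.exists_subset_card_eq (hGcard ▸ hnm : n ≤ G.card)
  -- distances in the grid
  have hGdist : ∀ p ∈ G, ∀ q ∈ G, p ≠ q → 1/(m:ℝ) ≤ dist p q := by
    intro p hp q hq hpq
    rw [hG, Finset.mem_image] at hp hq
    obtain ⟨a, _, rfl⟩ := hp
    obtain ⟨b, _, rfl⟩ := hq
    refine gpt_dist hm (fun h => hpq ?_)
    have hh := Prod.mk.inj h
    have hab : a = b := Prod.ext hh.1 hh.2
    rw [hab]
  refine ⟨P, ?_, hPcard, ?_⟩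
  · -- P inside the unit square
    intro x hx
    obtain ⟨⟨i, j⟩, hij, rfl⟩ := Finset.mem_image.mp (hG ▸ hPG hx)
    rw [Finset.mem_product, Finset.mem_range, Finset.mem_range] at hij
    intro k
    have hcoord : ∀ a : ℕ, a < m → (a:ℝ)/m ∈ Set.Icc (0:ℝ) 1 := by
      intro a ha
      constructor
      · positivity
      · rw [div_le_one hm0]; exact_mod_cast ha.le
    fin_cases k
    · exact hcoord i hij.1
    · exact hcoord j hij.2
  · -- the lower bound
    intro S hScomp hSconn hPS
    rcases eq_or_lt_of_le hn with h1 | h2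
    · -- n = 1 : trivial bound
      rw [← h1]
      simp [Real.sqrt_one]
    · -- n ≥ 2
      set r : ℝ := 1/(2*m) with hr
      have hrpos : 0 < r := by positivity
      -- each point of P has another point of P at distance ≥ 1/m ≥ r
      have hcross : ∀ p ∈ P, ENNReal.ofReal r ≤ μH[1] (S ∩ Metric.ball p r) := by
        intro p hp
        obtain ⟨q, hq, hqp⟩ := Finset.exists_mem_ne (hPcard ▸ h2) p
        have hd : r ≤ dist p q := by
          have := hGdist p (hPG hp) q (hPG hq) (Ne.symm hqp)
          calc r = 1/(2*m) := hr
            _ ≤ 1/(m:ℝ) := by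
                apply div_le_div_of_nonneg_left one_pos.le hm0
                linarith
            _ ≤ dist p q := this
        exact crossing_lemma hSconn (hPS hp) (hPS hq) hd
      -- disjoint balls
      have hdisj : (P : Set (EuclideanSpace ℝ (Fin 2))).PairwiseDisjoint
          (fun p => S ∩ Metric.ball p r) := by
        intro p hp q hq hpq
        apply Disjoint.inter_left' _ (Disjoint.inter_right' _ _)
        apply Metric.ball_disjoint_ball
        have := hGdist p (hPG hp) q (hPG hq) hpq
        calc r + r = 1/(m:ℝ) := by rw [hr]; field_simp; ring
          _ ≤ dist p q := this
      have hmeas : ∀ p ∈ P, MeasurableSet (S ∩ Metric.ball p r) :=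
        fun p _ => (hScomp.isClosed.measurableSet).inter measurableSet_ball
      -- sum up
      have hsum : (P.card : ENNReal) * ENNReal.ofReal r ≤ μH[1] S := by
        calc (P.card : ENNReal) * ENNReal.ofReal r
            = ∑ p ∈ P, ENNReal.ofReal r := by rw [Finset.sum_const, nsmul_eq_mul]
          _ ≤ ∑ p ∈ P, μH[1] (S ∩ Metric.ball p r) := Finset.sum_le_sum hcross
          _ = μH[1] (⋃ p ∈ P, S ∩ Metric.ball p r) :=
              (measure_biUnion_finset hdisj hmeas).symm
          _ ≤ μH[1] S := measure_mono (by
              intro x hx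
              simp only [Set.mem_iUnion] at hx
              obtain ⟨p, _, hxp, _⟩ := hx
              exact hxp)
      refine le_trans ?_ hsum
      rw [hPcard, ← ENNReal.ofReal_natCast n, ← ENNReal.ofReal_mul (by positivity)]
      apply ENNReal.ofReal_le_ofReal
      -- real inequality : (1/2)(√n - 1) ≤ n * r = n/(2m)
      have hms : (m:ℝ) ≤ Real.sqrt n + 1 := by
        rw [hmdef]
        push_cast
        have := Real.nat_sqrt_le_real_sqrt (a := n)
        linarith
      have hs1 : (1:ℝ) ≤ Real.sqrt n := by
        rw [show (1:ℝ) = Real.sqrt 1 from (Real.sqrt_one).symm]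
        exact Real.sqrt_le_sqrt (by exact_mod_cast hn)
      have hkey : (Real.sqrt n - 1) * m ≤ (n:ℝ) := by
        have h3 : (Real.sqrt n - 1) * m ≤ (Real.sqrt n - 1) * (Real.sqrt n + 1) := by
          apply mul_le_mul_of_nonneg_left hms (by linarith)
        have h4 : (Real.sqrt n - 1) * (Real.sqrt n + 1) = (n:ℝ) - 1 := by
          have := Real.sq_sqrt (show (0:ℝ) ≤ n by positivity)
          nlinarith
        linarith
      rw [hr, mul_one_div, le_div_iff₀ (by positivity : (0:ℝ) < 2*m)]
      nlinarith [hkey]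
end
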